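/- Let p > 0 and let M : ℝ≥0 → ℝ≥0 be increasing with M(0)=0 and polynomially bounded above with degree p and constant c_U ≥ 1. Let x ∈ ℝⁿ be a nonzero vector whose entry of largest absolute value is x₁, so |x₁| ≥ |xᵢ| for all i. Then M(|x₁|) / (Σᵢ M(|xᵢ|)) ≤ c_U · |x₁|^p / (Σᵢ |xᵢ|^p). -/
import Mathlib


theorem stmt_11 (n : ℕ) (p c_U : ℝ) (hp : 0 < p) (hcU : 1 ≤ c_U) (M : ℝ → ℝ)
    (hM0 : M 0 = 0)
    (hmono : ∀ x y, 0 ≤ x → x ≤ y → M x ≤ M y)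
    (hbound : ∀ x y, 0 < x → x < y → M y ≤ c_U * (y / x) ^ p * M x)
    (x : Fin (n + 1) → ℝ) (hx : x ≠ 0) (hmax : ∀ i, |x i| ≤ |x 0|) :
    M |x 0| / (∑ i, M |x i|) ≤ c_U * (|x 0| ^ p / ∑ i, |x i| ^ p) := by
  have hcU0 : 0 ≤ c_U := le_trans zero_le_one hcU
  have hMnn : ∀ t : ℝ, 0 ≤ t → 0 ≤ M t := fun t ht => hM0 ▸ hmono 0 t le_rfl ht
  -- |x 0| > 0
  have hx0 : 0 < |x 0| := by
    obtain ⟨i, hi⟩ := Function.ne_iff.mp hx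
    exact lt_of_lt_of_le (abs_pos.mpr hi) (hmax i)
  have hT : 0 < ∑ i, |x i| ^ p := by
    have h0 : 0 < |x 0| ^ p := Real.rpow_pos_of_pos hx0 p
    have := Finset.single_le_sum (f := fun i => |x i| ^ p)
      (fun i _ => Real.rpow_nonneg (abs_nonneg _) p) (Finset.mem_univ 0)
    linarith
  have hS : 0 ≤ ∑ i, M |x i| :=
    Finset.sum_nonneg fun i _ => hMnn _ (abs_nonneg _)
  rcases eq_or_lt_of_le hS with hS0 | hS0
  · rw [← hS0, div_zero]
    positivity
  -- key pointwise inequality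
  have key : ∀ i, M |x 0| * |x i| ^ p ≤ c_U * |x 0| ^ p * M |x i| := by
    intro i
    rcases eq_or_lt_of_le (abs_nonneg (x i)) with h0 | h0
    · rw [← h0, Real.zero_rpow hp.ne', mul_zero]
      exact mul_nonneg (mul_nonneg hcU0 (Real.rpow_nonneg (abs_nonneg _) p))
        (hMnn _ le_rfl)
    rcases eq_or_lt_of_le (hmax i) with heq | hlt
    · rw [heq]
      have hM0' : 0 ≤ M |x 0| := hMnn _ (abs_nonneg _)
      have hxp : 0 ≤ |x 0| ^ p := Real.rpow_nonneg (abs_nonneg _) p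
      nlinarith [mul_nonneg hxp hM0']
    · have hb := hbound _ _ h0 hlt
      have hdiv : (|x 0| / |x i|) ^ p * |x i| ^ p = |x 0| ^ p := by
        rw [← Real.mul_rpow (by positivity) (le_of_lt h0), div_mul_cancel₀]
        exact h0.ne'
      have hMi : 0 ≤ M |x i| := hMnn _ (abs_nonneg _)
      have hxip : 0 ≤ |x i| ^ p := Real.rpow_nonneg (abs_nonneg _) p
      calc M |x 0| * |x i| ^ p ≤ (c_U * (|x 0| / |x i|) ^ p * M |x i|) * |x i| ^ p :=
            mul_le_mul_of_nonneg_right hb hxip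
        _ = c_U * ((|x 0| / |x i|) ^ p * |x i| ^ p) * M |x i| := by ring
        _ = c_U * |x 0| ^ p * M |x i| := by rw [hdiv]
  rw [← mul_div_assoc, div_le_div_iff₀ hS0 hT]
  calc M |x 0| * ∑ i, |x i| ^ p = ∑ i, M |x 0| * |x i| ^ p := Finset.mul_sum _ _ _
    _ ≤ ∑ i, c_U * |x 0| ^ p * M |x i| := Finset.sum_le_sum fun i _ => key i
    _ = c_U * |x 0| ^ p * ∑ i, M |x i| := (Finset.mul_sum _ _ _).symm
    _ = c_U * |x 0| ^ p * ∑ i, M |x i| := rfl
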